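/- Let T be a finite rooted tree with leaf set L, m_u = product of child-degrees along the root-to-u path, and m_{uv} = product of child-degrees along the path from the root to the least common ancestor of u and v. Suppose events {E_v}_{v∈L} on a probability space satisfy: (1) P(E_v) ≥ (1/2)m_v^{−7/8} for all v ∈ L; (2) P(E_u ∩ E_v) ≤ m_{uv}^{1/8}(m_u m_v)^{−7/8} for all u,v ∈ L; and (3) for every leaf u, Σ_{h=0}^{h_u} Π_{i=0}^{h−1} deg↓(f_u(i))^{−7/8} ≤ 2. Then P(⋃_{v∈L} E_v) ≥ 1/8. -/

import Mathlib

open MeasureTheory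

/-- A finite rooted tree, encoded by a parent function together with a depth function
that certifies that iterating `parent` leads to the root. -/
structure FiniteRootedTree (α : Type*) where
  root : α
  parent : α → α
  depth : α → ℕ
  depth_root : depth root = 0
  parent_depth : ∀ v, v ≠ root → depth (parent v) + 1 = depth v
  root_of_depth_zero : ∀ v, depth v = 0 → v = root

variable {α : Type*} [Fintype α] [DecidableEq α]

/-- The set of children of a vertex. -/
def FiniteRootedTree.children (T : FiniteRootedTree α) (v : α) : Finset α :=
  Finset.univ.filter fun u => T.parent u = v ∧ u ≠ T.root

/-- The number of children `deg↓(v)` of a vertex. -/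
def FiniteRootedTree.degDown (T : FiniteRootedTree α) (v : α) : ℕ := (T.children v).card

/-- The set of leaves. -/
def FiniteRootedTree.leaves (T : FiniteRootedTree α) : Finset α :=
  Finset.univ.filter fun v => T.children v = ∅

/-- `pathVertex u k` is the vertex `f_u(k)` at depth `k` on the root-to-`u` path. -/
def FiniteRootedTree.pathVertex (T : FiniteRootedTree α) (u : α) (k : ℕ) : α :=
  T.parent^[T.depth u - k] u

/-- The weight `m_u = Π_{k < h_u} deg↓(f_u(k))` of a vertex `u`. -/
def FiniteRootedTree.mweight (T : FiniteRootedTree α) (u : α) : ℕ :=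
  ∏ k ∈ Finset.range (T.depth u), T.degDown (T.pathVertex u k)

/-- The depth `h_{uv}` of the least common ancestor of `u` and `v`. -/
def FiniteRootedTree.lcaDepth (T : FiniteRootedTree α) (u v : α) : ℕ :=
  Nat.findGreatest (fun k => T.pathVertex u k = T.pathVertex v k)
    (min (T.depth u) (T.depth v))

/-- `m_{uv} = Π_{k < h_{uv}} deg↓(f_u(k))`, the weight along the path from the root to the
least common ancestor of `u` and `v`. -/
def FiniteRootedTree.mweightLCA (T : FiniteRootedTree α) (u v : α) : ℕ :=
  ∏ k ∈ Finset.range (T.lcaDepth u v), T.degDown (T.pathVertex u k)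

namespace FiniteRootedTree
variable (T : FiniteRootedTree α)

lemma depth_iterate (v : α) : ∀ j, j ≤ T.depth v → T.depth (T.parent^[j] v) = T.depth v - j := by
  intro j
  induction j with
  | zero => simp
  | succ n ih =>
    intro hn
    have h1 : n ≤ T.depth v := Nat.le_of_succ_le hn
    have h2 := ih h1
    have hw : T.parent^[n] v ≠ T.root := by
      intro h
      rw [h, T.depth_root] at h2
      omega
    rw [Function.iterate_succ_apply']
    have := T.parent_depth _ hw
    omega

lemma depth_pathVertex {u : α} {k : ℕ} (h : k ≤ T.depth u) :
    T.depth (T.pathVertex u k) = k := by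
  rw [pathVertex, T.depth_iterate u _ (Nat.sub_le _ _)]; omega

lemma pathVertex_self (u : α) : T.pathVertex u (T.depth u) = u := by
  simp [pathVertex]

lemma pathVertex_zero (u : α) : T.pathVertex u 0 = T.root := by
  rw [pathVertex, Nat.sub_zero]
  apply T.root_of_depth_zero
  rw [T.depth_iterate u _ le_rfl]; omega

lemma pathVertex_pathVertex {u : α} {h k : ℕ} (hk : k ≤ h) (hh : h ≤ T.depth u) :
    T.pathVertex (T.pathVertex u h) k = T.pathVertex u k := by
  have hd : T.depth (T.pathVertex u h) = h := T.depth_pathVertex hh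
  rw [pathVertex, hd, pathVertex, pathVertex, ← Function.iterate_add_apply]
  congr 1
  omega

lemma parent_pathVertex_succ {u : α} {h : ℕ} (hh : h < T.depth u) :
    T.parent (T.pathVertex u (h + 1)) = T.pathVertex u h := by
  have he : T.depth u - h = (T.depth u - (h + 1)) + 1 := by omega
  rw [pathVertex, pathVertex, he, Function.iterate_succ_apply']

lemma pathVertex_succ_mem_children {u : α} {h : ℕ} (hh : h < T.depth u) :
    T.pathVertex u (h + 1) ∈ T.children (T.pathVertex u h) := by
  simp only [children, Finset.mem_filter, Finset.mem_univ, true_and]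
  refine ⟨T.parent_pathVertex_succ hh, ?_⟩
  intro hr
  have := T.depth_pathVertex (show h + 1 ≤ T.depth u from hh)
  rw [hr, T.depth_root] at this
  omega

lemma one_le_degDown_pathVertex {u : α} {k : ℕ} (h : k < T.depth u) :
    1 ≤ T.degDown (T.pathVertex u k) := by
  rw [degDown, Nat.one_le_iff_ne_zero, Ne, Finset.card_eq_zero]
  intro he
  have := T.pathVertex_succ_mem_children h
  rw [he] at this
  simp at this

lemma one_le_partial {u : α} {h : ℕ} (hh : h ≤ T.depth u) :
    1 ≤ ∏ k ∈ Finset.range h, T.degDown (T.pathVertex u k) := by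
  apply Finset.one_le_prod'
  intro k hk
  exact T.one_le_degDown_pathVertex (lt_of_lt_of_le (Finset.mem_range.1 hk) hh)

lemma one_le_mweight (u : α) : 1 ≤ T.mweight u := T.one_le_partial le_rfl

lemma mweight_pos (u : α) : (0 : ℝ) < (T.mweight u : ℝ) := by
  exact_mod_cast Nat.lt_of_lt_of_le Nat.zero_lt_one (T.one_le_mweight u)

def leavesBelow (w : α) : Finset α :=
  T.leaves.filter fun u => T.depth w ≤ T.depth u ∧ T.pathVertex u (T.depth w) = w

lemma depth_of_mem_children {w c : α} (hc : c ∈ T.children w) :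
    T.depth c = T.depth w + 1 := by
  simp only [children, Finset.mem_filter, Finset.mem_univ, true_and] at hc
  have := T.parent_depth c hc.2
  rw [hc.1] at this
  omega

lemma pathVertex_depth_child {w c : α} (hc : c ∈ T.children w) :
    T.pathVertex c (T.depth w) = w := by
  have hd := T.depth_of_mem_children hc
  simp only [children, Finset.mem_filter, Finset.mem_univ, true_and] at hc
  rw [pathVertex, hd, Nat.add_sub_cancel_left, Function.iterate_one, hc.1]

lemma mweight_child {w c : α} (hc : c ∈ T.children w) :
    T.mweight c = T.mweight w * T.degDown w := by
  have hd := T.depth_of_mem_children hc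
  have hcw := T.pathVertex_depth_child hc
  have hprod : (∏ k ∈ Finset.range (T.depth w), T.degDown (T.pathVertex c k)) = T.mweight w := by
    refine Finset.prod_congr rfl fun k hk => ?_
    have heq : T.pathVertex w k = T.pathVertex c k := by
      conv_lhs => rw [← hcw]
      rw [T.pathVertex_pathVertex (Finset.mem_range.1 hk).le (by omega)]
    rw [heq]
  rw [mweight, hd, Finset.prod_range_succ, hcw, hprod, mweight]

lemma leavesBelow_of_no_children {w : α} (hch : T.children w = ∅) :
    T.leavesBelow w = {w} := by
  ext u
  simp only [leavesBelow, leaves, Finset.mem_filter, Finset.mem_univ, true_and,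
    Finset.mem_singleton]
  constructor
  · rintro ⟨hu, hd, hp⟩
    rcases Nat.eq_or_lt_of_le hd with he | hlt
    · rw [he] at hp
      rwa [T.pathVertex_self] at hp
    · exfalso
      have := T.pathVertex_succ_mem_children (u := u) (h := T.depth w) hlt
      rw [hp, hch] at this
      simp at this
  · rintro rfl
    exact ⟨hch, le_rfl, T.pathVertex_self u⟩

lemma leavesBelow_eq_biUnion {w : α} :
    T.children w ≠ ∅ → T.leavesBelow w = (T.children w).biUnion T.leavesBelow := by
  intro hch
  ext u
  simp only [leavesBelow, leaves, Finset.mem_filter, Finset.mem_univ, true_and,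
    Finset.mem_biUnion]
  constructor
  · rintro ⟨hu, hd, hp⟩
    have hlt : T.depth w < T.depth u := by
      rcases Nat.eq_or_lt_of_le hd with he | hlt
      · exfalso
        rw [he, T.pathVertex_self] at hp
        rw [hp] at hu
        exact hch hu
      · exact hlt
    refine ⟨T.pathVertex u (T.depth w + 1), ?_, hu, ?_, ?_⟩
    · have hm := T.pathVertex_succ_mem_children hlt
      rwa [hp] at hm
    · rw [T.depth_pathVertex (show T.depth w + 1 ≤ T.depth u from hlt)]
      omega
    · rw [T.depth_pathVertex (show T.depth w + 1 ≤ T.depth u from hlt)]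
  · rintro ⟨c, hc, hu, hd, hp⟩
    have hdc := T.depth_of_mem_children hc
    refine ⟨hu, by omega, ?_⟩
    rw [← T.parent_pathVertex_succ (u := u) (h := T.depth w) (by omega), ← hdc, hp]
    simp only [children, Finset.mem_filter, Finset.mem_univ, true_and] at hc
    exact hc.1

lemma leavesBelow_pairwise_disjoint {w : α} :
    (↑(T.children w) : Set α).PairwiseDisjoint T.leavesBelow := by
  intro c hc c' hc' hne
  simp only [Finset.mem_coe] at hc hc'
  refine Finset.disjoint_left.2 fun u hu hu' => hne ?_
  simp only [leavesBelow, Finset.mem_filter] at hu hu'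
  rw [T.depth_of_mem_children hc] at hu
  rw [T.depth_of_mem_children hc'] at hu'
  exact hu.2.2.symm.trans hu'.2.2

lemma subtree_sum (w : α) :
    ∑ u ∈ T.leavesBelow w, ((T.mweight u : ℝ))⁻¹ = ((T.mweight w : ℝ))⁻¹ := by
  set N := Finset.univ.sup T.depth with hN
  have hle : ∀ v : α, T.depth v ≤ N := fun v => Finset.le_sup (Finset.mem_univ v)
  suffices H : ∀ n (w : α), N - T.depth w ≤ n →
      ∑ u ∈ T.leavesBelow w, ((T.mweight u : ℝ))⁻¹ = ((T.mweight w : ℝ))⁻¹ from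
    H (N - T.depth w) w le_rfl
  intro n
  induction n with
  | zero =>
    intro w hw
    have hch : T.children w = ∅ := by
      by_contra hne
      obtain ⟨c, hc⟩ := Finset.nonempty_iff_ne_empty.2 hne
      have h1 := T.depth_of_mem_children hc
      have h2 := hle c
      have h3 := hle w
      omega
    rw [T.leavesBelow_of_no_children hch, Finset.sum_singleton]
  | succ n ih =>
    intro w hw
    by_cases hch : T.children w = ∅
    · rw [T.leavesBelow_of_no_children hch, Finset.sum_singleton]
    · rw [T.leavesBelow_eq_biUnion hch,
        Finset.sum_biUnion (T.leavesBelow_pairwise_disjoint (w := w))]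
      have hstep : ∀ c ∈ T.children w,
          ∑ u ∈ T.leavesBelow c, ((T.mweight u : ℝ))⁻¹ = ((T.mweight c : ℝ))⁻¹ := by
        intro c hc
        apply ih
        rw [T.depth_of_mem_children hc]
        omega
      rw [Finset.sum_congr rfl hstep]
      have hdeg : T.degDown w ≠ 0 := by
        rw [degDown, Ne, Finset.card_eq_zero]
        exact hch
      have : ∀ c ∈ T.children w, ((T.mweight c : ℝ))⁻¹
          = ((T.mweight w : ℝ) * (T.degDown w : ℝ))⁻¹ := by
        intro c hc
        rw [T.mweight_child hc]
        push_cast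
        ring
      rw [Finset.sum_congr rfl this, Finset.sum_const, ← degDown, nsmul_eq_mul]
      have hmw := T.mweight_pos w
      have hdegR : (0 : ℝ) < (T.degDown w : ℝ) := by
        exact_mod_cast Nat.pos_of_ne_zero hdeg
      rw [mul_inv]
      field_simp

lemma sum_inv_mweight : ∑ u ∈ T.leaves, ((T.mweight u : ℝ))⁻¹ = 1 := by
  have h1 : T.leavesBelow T.root = T.leaves := by
    ext u
    simp only [leavesBelow, Finset.mem_filter, T.depth_root]
    exact ⟨fun h => h.1, fun h => ⟨h, Nat.zero_le _, T.pathVertex_zero u⟩⟩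
  have h2 := T.subtree_sum T.root
  rw [h1] at h2
  rw [h2, mweight, T.depth_root]
  simp

lemma lcaDepth_le_right (u v : α) : T.lcaDepth u v ≤ T.depth v :=
  le_trans (Nat.findGreatest_le _) (min_le_right _ _)

lemma lcaDepth_le_left (u v : α) : T.lcaDepth u v ≤ T.depth u :=
  le_trans (Nat.findGreatest_le _) (min_le_left _ _)

lemma pathVertex_lcaDepth (u v : α) :
    T.pathVertex u (T.lcaDepth u v) = T.pathVertex v (T.lcaDepth u v) := by
  rw [lcaDepth]
  exact Nat.findGreatest_spec (P := fun k => T.pathVertex u k = T.pathVertex v k)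
    (m := 0) (Nat.zero_le _) (by show T.pathVertex u 0 = T.pathVertex v 0; rw [T.pathVertex_zero, T.pathVertex_zero])

lemma mweight_pathVertex {u : α} {h : ℕ} (hh : h ≤ T.depth u) :
    T.mweight (T.pathVertex u h) = ∏ k ∈ Finset.range h, T.degDown (T.pathVertex u k) := by
  rw [mweight, T.depth_pathVertex hh]
  refine Finset.prod_congr rfl fun k hk => ?_
  rw [T.pathVertex_pathVertex (Finset.mem_range.1 hk).le hh]

lemma key_sum (u : α) :
    ∑ v ∈ T.leaves, (T.mweightLCA u v : ℝ) ^ ((1 / 8 : ℝ)) * ((T.mweight v : ℝ))⁻¹ ≤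
      ∑ h ∈ Finset.range (T.depth u + 1),
        ∏ i ∈ Finset.range h, (T.degDown (T.pathVertex u i) : ℝ) ^ (-(7 / 8 : ℝ)) := by
  have hmaps : ∀ v ∈ T.leaves, T.lcaDepth u v ∈ Finset.range (T.depth u + 1) := by
    intro v _
    rw [Finset.mem_range]
    exact Nat.lt_succ_of_le (T.lcaDepth_le_left u v)
  rw [← Finset.sum_fiberwise_of_maps_to hmaps]
  refine Finset.sum_le_sum fun h hh => ?_
  rw [Finset.mem_range] at hh
  have hhd : h ≤ T.depth u := by omega
  set W : ℝ := ∏ k ∈ Finset.range h, (T.degDown (T.pathVertex u k) : ℝ) with hW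
  have hWpos : 0 < W := by
    have h1 := T.one_le_partial (u := u) hhd
    rw [hW, ← Nat.cast_prod]
    exact_mod_cast Nat.lt_of_lt_of_le Nat.zero_lt_one h1
  have hterm : ∀ v ∈ T.leaves.filter (fun v => T.lcaDepth u v = h),
      (T.mweightLCA u v : ℝ) ^ ((1 / 8 : ℝ)) * ((T.mweight v : ℝ))⁻¹ =
        W ^ ((1 / 8 : ℝ)) * ((T.mweight v : ℝ))⁻¹ := by
    intro v hv
    rw [Finset.mem_filter] at hv
    rw [mweightLCA, hv.2, hW]
    push_cast
    ring
  rw [Finset.sum_congr rfl hterm, ← Finset.mul_sum]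
  have hsub : T.leaves.filter (fun v => T.lcaDepth u v = h) ⊆
      T.leavesBelow (T.pathVertex u h) := by
    intro v hv
    rw [Finset.mem_filter] at hv
    rw [leavesBelow, Finset.mem_filter, T.depth_pathVertex hhd]
    refine ⟨hv.1, hv.2 ▸ T.lcaDepth_le_right u v, ?_⟩
    have := T.pathVertex_lcaDepth u v
    rw [hv.2] at this
    exact this.symm
  have hsum : ∑ v ∈ T.leaves.filter (fun v => T.lcaDepth u v = h),
      ((T.mweight v : ℝ))⁻¹ ≤ W⁻¹ := by
    calc ∑ v ∈ T.leaves.filter (fun v => T.lcaDepth u v = h), ((T.mweight v : ℝ))⁻¹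
        ≤ ∑ v ∈ T.leavesBelow (T.pathVertex u h), ((T.mweight v : ℝ))⁻¹ :=
          Finset.sum_le_sum_of_subset_of_nonneg hsub
            (fun v _ _ => inv_nonneg.2 (Nat.cast_nonneg _))
      _ = ((T.mweight (T.pathVertex u h) : ℝ))⁻¹ := T.subtree_sum _
      _ = W⁻¹ := by rw [T.mweight_pathVertex hhd, hW]; push_cast; ring
  calc W ^ ((1 / 8 : ℝ)) * ∑ v ∈ T.leaves.filter (fun v => T.lcaDepth u v = h),
        ((T.mweight v : ℝ))⁻¹
      ≤ W ^ ((1 / 8 : ℝ)) * W⁻¹ :=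
        mul_le_mul_of_nonneg_left hsum (Real.rpow_nonneg hWpos.le _)
    _ = W ^ (-(7 / 8 : ℝ)) := by
        rw [← Real.rpow_neg_one W, ← Real.rpow_add hWpos]
        norm_num
    _ = ∏ i ∈ Finset.range h, (T.degDown (T.pathVertex u i) : ℝ) ^ (-(7 / 8 : ℝ)) := by
        rw [hW, ← Real.finset_prod_rpow _ _ (fun i _ => Nat.cast_nonneg _)]

end FiniteRootedTree

/-- Second moment percolation bound on trees: if the leaf events `E_v` satisfy
`P(E_v) ≥ (1/2)m_v^{−7/8}`, `P(E_u ∩ E_v) ≤ m_{uv}^{1/8}(m_u m_v)^{−7/8}`, and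
`Σ_{h=0}^{h_u} Π_{i<h} deg↓(f_u(i))^{−7/8} ≤ 2` for every leaf `u`, then
`P(⋃_v E_v) ≥ 1/8`. -/
theorem tree_percolation {Ω : Type*} [MeasurableSpace Ω]
    (T : FiniteRootedTree α) (μ : Measure Ω) [IsProbabilityMeasure μ]
    (E : α → Set Ω) (hE : ∀ v, MeasurableSet (E v))
    (h1 : ∀ v ∈ T.leaves,
      (1 / 2 : ℝ) * (T.mweight v : ℝ) ^ (-(7 / 8 : ℝ)) ≤ (μ (E v)).toReal)
    (h2 : ∀ u ∈ T.leaves, ∀ v ∈ T.leaves,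
      (μ (E u ∩ E v)).toReal ≤
        (T.mweightLCA u v : ℝ) ^ ((1 / 8 : ℝ)) *
          ((T.mweight u : ℝ) * (T.mweight v : ℝ)) ^ (-(7 / 8 : ℝ)))
    (h3 : ∀ u ∈ T.leaves,
      ∑ h ∈ Finset.range (T.depth u + 1),
        ∏ i ∈ Finset.range h, (T.degDown (T.pathVertex u i) : ℝ) ^ (-(7 / 8 : ℝ)) ≤ 2) :
    (1 / 8 : ℝ) ≤ (μ (⋃ v ∈ T.leaves, E v)).toReal := by
  classical
  set a : α → ℝ := fun u => (T.mweight u : ℝ) ^ (-(1 / 8 : ℝ)) with ha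
  have hapos : ∀ u, 0 < a u := fun u => Real.rpow_pos_of_pos (T.mweight_pos u) _
  have hmul : ∀ u : α, a u * (T.mweight u : ℝ) ^ (-(7 / 8 : ℝ)) = ((T.mweight u : ℝ))⁻¹ := by
    intro u
    rw [ha]
    rw [← Real.rpow_add (T.mweight_pos u)]
    have he : (-(1 / 8 : ℝ)) + (-(7 / 8 : ℝ)) = -1 := by norm_num
    rw [he, Real.rpow_neg_one]
  set S : Set Ω := ⋃ v ∈ T.leaves, E v with hS
  have hSmeas : MeasurableSet S :=
    MeasurableSet.biUnion (Set.to_countable _) fun v _ => hE v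
  have hEsubS : ∀ u ∈ T.leaves, E u ⊆ S := by
    intro u hu
    exact Set.subset_biUnion_of_mem hu
  set Z : Ω → ℝ := fun ω => ∑ u ∈ T.leaves, Set.indicator (E u) (fun _ => a u) ω with hZ
  have hint : ∀ u : α, Integrable (Set.indicator (E u) (fun _ => a u)) μ := fun u =>
    (integrable_indicator_iff (hE u)).2 (integrableOn_const (measure_ne_top μ _))
  have hZint : Integrable Z μ := integrable_finset_sum _ fun u _ => hint u
  have hintUV : ∀ u v : α, Integrable (Set.indicator (E u ∩ E v) (fun _ => a u * a v)) μ :=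
    fun u v => (integrable_indicator_iff ((hE u).inter (hE v))).2
      (integrableOn_const (measure_ne_top μ _))
  have hZsqeq : (fun ω => Z ω * Z ω) = fun ω => ∑ u ∈ T.leaves, ∑ v ∈ T.leaves,
      Set.indicator (E u ∩ E v) (fun _ => a u * a v) ω := by
    funext ω
    rw [hZ]
    simp only [Finset.sum_mul_sum]
    refine Finset.sum_congr rfl fun u _ => Finset.sum_congr rfl fun v _ => ?_
    rw [← Set.inter_indicator_mul]
  have hZsqint : Integrable (fun ω => Z ω * Z ω) μ := by
    rw [hZsqeq]
    exact integrable_finset_sum _ fun u _ => integrable_finset_sum _ fun v _ => hintUV u v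
  set I1 : ℝ := ∑ u ∈ T.leaves, a u * (μ (E u)).toReal with hI1def
  set I2 : ℝ := ∑ u ∈ T.leaves, ∑ v ∈ T.leaves, a u * a v * (μ (E u ∩ E v)).toReal with hI2def
  have hI1 : ∫ ω, Z ω ∂μ = I1 := by
    rw [hZ, integral_finset_sum _ fun u _ => hint u, hI1def]
    refine Finset.sum_congr rfl fun u _ => ?_
    rw [integral_indicator_const _ (hE u), smul_eq_mul, mul_comm, measureReal_def]
  have hI2 : ∫ ω, Z ω * Z ω ∂μ = I2 := by
    rw [hZsqeq, integral_finset_sum _ fun u _ =>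
        integrable_finset_sum _ fun v _ => hintUV u v, hI2def]
    refine Finset.sum_congr rfl fun u _ => ?_
    rw [integral_finset_sum _ fun v _ => hintUV u v]
    refine Finset.sum_congr rfl fun v _ => ?_
    rw [integral_indicator_const _ ((hE u).inter (hE v)), smul_eq_mul, mul_comm, measureReal_def]
  have hSint : Integrable (Set.indicator S fun _ => (1 : ℝ)) μ :=
    (integrable_indicator_iff hSmeas).2 (integrableOn_const (measure_ne_top μ _))
  set m : ℝ := (μ S).toReal with hmdef
  have hSintval : ∫ ω, Set.indicator S (fun _ => (1 : ℝ)) ω ∂μ = m := by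
    rw [integral_indicator_const _ hSmeas, smul_eq_mul, mul_one, measureReal_def]
  have hmnonneg : 0 ≤ m := ENNReal.toReal_nonneg
  -- lower bound on I1
  have hI1ge : (1 / 2 : ℝ) ≤ I1 := by
    have : (1 / 2 : ℝ) = ∑ u ∈ T.leaves, (1 / 2 : ℝ) * ((T.mweight u : ℝ))⁻¹ := by
      rw [← Finset.mul_sum, T.sum_inv_mweight, mul_one]
    rw [this, hI1def]
    refine Finset.sum_le_sum fun u hu => ?_
    calc (1 / 2 : ℝ) * ((T.mweight u : ℝ))⁻¹
        = a u * ((1 / 2 : ℝ) * (T.mweight u : ℝ) ^ (-(7 / 8 : ℝ))) := by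
          rw [← hmul u]; ring
      _ ≤ a u * (μ (E u)).toReal :=
          mul_le_mul_of_nonneg_left (h1 u hu) (hapos u).le
  -- upper bound on I2
  have hI2le : I2 ≤ 2 := by
    rw [hI2def]
    calc ∑ u ∈ T.leaves, ∑ v ∈ T.leaves, a u * a v * (μ (E u ∩ E v)).toReal
        ≤ ∑ u ∈ T.leaves, ∑ v ∈ T.leaves, ((T.mweight u : ℝ))⁻¹ *
            ((T.mweightLCA u v : ℝ) ^ ((1 / 8 : ℝ)) * ((T.mweight v : ℝ))⁻¹) := by
          refine Finset.sum_le_sum fun u hu => Finset.sum_le_sum fun v hv => ?_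
          calc a u * a v * (μ (E u ∩ E v)).toReal
              ≤ a u * a v * ((T.mweightLCA u v : ℝ) ^ ((1 / 8 : ℝ)) *
                  ((T.mweight u : ℝ) * (T.mweight v : ℝ)) ^ (-(7 / 8 : ℝ))) :=
                mul_le_mul_of_nonneg_left (h2 u hu v hv)
                  (mul_nonneg (hapos u).le (hapos v).le)
            _ = ((T.mweight u : ℝ))⁻¹ *
                ((T.mweightLCA u v : ℝ) ^ ((1 / 8 : ℝ)) * ((T.mweight v : ℝ))⁻¹) := by
                rw [Real.mul_rpow (Nat.cast_nonneg _) (Nat.cast_nonneg _)]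
                rw [← hmul u, ← hmul v]
                ring
      _ = ∑ u ∈ T.leaves, ((T.mweight u : ℝ))⁻¹ *
            ∑ v ∈ T.leaves, (T.mweightLCA u v : ℝ) ^ ((1 / 8 : ℝ)) * ((T.mweight v : ℝ))⁻¹ := by
          refine Finset.sum_congr rfl fun u _ => ?_
          rw [Finset.mul_sum]
      _ ≤ ∑ u ∈ T.leaves, ((T.mweight u : ℝ))⁻¹ * 2 := by
          refine Finset.sum_le_sum fun u hu => ?_
          exact mul_le_mul_of_nonneg_left ((T.key_sum u).trans (h3 u hu))
            (inv_nonneg.2 (Nat.cast_nonneg _))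
      _ = 2 := by rw [← Finset.sum_mul, T.sum_inv_mweight, one_mul]
  -- positivity of m
  have hmpos : 0 < m := by
    rcases eq_or_lt_of_le hmnonneg with he | h
    · exfalso
      have hSzero : μ S = 0 := by
        rcases (ENNReal.toReal_eq_zero_iff _).1 he.symm with h' | h'
        · exact h'
        · exact absurd h' (measure_ne_top μ S)
      have hz : I1 = 0 := by
        rw [hI1def]
        refine Finset.sum_eq_zero fun u hu => ?_
        rw [measure_mono_null (hEsubS u hu) hSzero]
        simp
      linarith
    · exact h
  -- second moment inequality
  set t : ℝ := I1 / m with htdef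
  have htm : t * m = I1 := div_mul_cancel₀ _ hmpos.ne'
  have hptnonneg : ∀ ω, 0 ≤ Z ω * Z ω - 2 * t * Z ω +
      t ^ 2 * Set.indicator S (fun _ => (1 : ℝ)) ω := by
    intro ω
    by_cases hω : ω ∈ S
    · rw [Set.indicator_of_mem hω]
      nlinarith [sq_nonneg (Z ω - t)]
    · have hZ0 : Z ω = 0 := by
        rw [hZ]
        refine Finset.sum_eq_zero fun u hu => ?_
        exact Set.indicator_of_notMem (fun h => hω (hEsubS u hu h)) _
      rw [Set.indicator_of_notMem hω, hZ0]
      simp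
  have h0 : (0 : ℝ) ≤ I2 - 2 * t * I1 + t ^ 2 * m := by
    have hineq := integral_nonneg (μ := μ) (f := fun ω => Z ω * Z ω - 2 * t * Z ω +
        t ^ 2 * Set.indicator S (fun _ => (1 : ℝ)) ω) hptnonneg
    have hA : Integrable (fun ω => Z ω * Z ω - 2 * t * Z ω) μ :=
      hZsqint.sub (hZint.const_mul _)
    have hB : Integrable (fun ω => t ^ 2 * Set.indicator S (fun _ => (1 : ℝ)) ω) μ :=
      hSint.const_mul _
    rwa [integral_add hA hB, integral_sub hZsqint (hZint.const_mul (2 * t)),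
      integral_const_mul, integral_const_mul, hI1, hI2, hSintval] at hineq
  have key : I1 ^ 2 ≤ I2 * m := by
    have hmul0 := mul_le_mul_of_nonneg_right h0 hmnonneg
    nlinarith [hmul0, htm]
  show (1 / 8 : ℝ) ≤ m
  nlinarith [key, hI1ge, hI2le, hmnonneg]
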